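/- Let K be an inner model of ZFC + GCH with the weak covering property at a strong limit singular cardinal λ of countable cofinality ((λ⁺)^K = λ⁺), and suppose K has a definable well-ordering ≤_K of λ→2 ∩ K. Then the set A_K = {x ∈ WO_λ ∩ K : ∀y ∈ K ((λ,∈_x) ≅ (λ,∈_y) → x ≤_K y)} (the ≤_K-minimal codes, computed in K) has cardinality λ⁺ in V and fails the λ-PSP in V. -/

import Mathlib

universe u
open Cardinal

/-- The canonical type of order type `λ` representing the cardinal `λ` as a set of "ordinals". -/
abbrev T (lam : Cardinal.{u}) : Type u := lam.ord.ToType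

/-- The binary relation on `λ` coded by `z : λ → 2` via the pairing bijection `pair`:
`(a, b) ∈ E_z` iff `z ⟨a,b⟩ = 0` (we use `false` for `0`). -/
def Ez {lam : Cardinal.{u}} (pair : T lam × T lam ≃ T lam) (z : T lam → Bool)
    (a b : T lam) : Prop := z (pair (a, b)) = false

/-- `z` codes a well-order of order type `α`: the relation `E_z` only relates elements of a set
`S` (its field), and restricted to `S` it is a well-order of order type `α`. -/
def codesWO {lam : Cardinal.{u}} (pair : T lam × T lam ≃ T lam) (z : T lam → Bool)
    (α : Ordinal.{u}) : Prop :=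
  ∃ S : Set (T lam), (∀ a b : T lam, Ez pair z a b → a ∈ S ∧ b ∈ S) ∧
    ∃ hwo : IsWellOrder S (fun a b : S => Ez pair z a.1 b.1),
      @Ordinal.type S (fun a b : S => Ez pair z a.1 b.1) hwo = α

/-- The bounded topology on the generalised Cantor space `λ → 2`: basic open sets are
determined by fixing the values on a bounded (initial) segment of `λ`. -/
def btop (lam : Cardinal.{u}) : TopologicalSpace (T lam → Bool) :=
  TopologicalSpace.generateFrom
    {V | ∃ (b : T lam) (s : T lam → Bool), V = {x | ∀ a : T lam, a < b → x a = s a}}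

/-- `A` is a λ-analytic subset of `λ → 2`: it is a continuous image of a λ-Polish space,
i.e. of a completely metrizable space of weight `≤ λ`. -/
def IsLamAnalytic (lam : Cardinal.{u}) (A : Set (T lam → Bool)) : Prop :=
  ∃ (Y : Type u) (tY : TopologicalSpace Y) (m : MetricSpace Y),
    m.toUniformSpace.toTopologicalSpace = tY ∧ @CompleteSpace Y m.toUniformSpace ∧
    (∃ B : Set (Set Y), @TopologicalSpace.IsTopologicalBasis Y tY B ∧ #B ≤ lam) ∧
    ∃ f : Y → (T lam → Bool), @Continuous Y _ tY (btop lam) f ∧ Set.range f = A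

/-- `f` is a topological embedding from `(X, τX)` to `(Y, τY)`:
injective, continuous, and inducing (every open set is the preimage of an open set). -/
def IsTopEmb {X Y : Type u} (τX : TopologicalSpace X) (τY : TopologicalSpace Y)
    (f : X → Y) : Prop :=
  Function.Injective f ∧ @Continuous X Y τX τY f ∧
    ∀ U : Set X, @IsOpen X τX U → ∃ V : Set Y, @IsOpen Y τY V ∧ f ⁻¹' V = U

namespace MCAux

variable {lam : Cardinal.{u}} {pair : T lam × T lam ≃ T lam}

lemma mk_T (lam : Cardinal.{u}) : #(T lam) = lam := by
  rw [Cardinal.mk_toType, Cardinal.card_ord]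

lemma codes_card_le {z : T lam → Bool} {α : Ordinal.{u}}
    (h : codesWO pair z α) : α.card ≤ lam := by
  obtain ⟨S, -, hwo, htype⟩ := h
  rw [← htype, Ordinal.card_type]
  exact (Cardinal.mk_set_le S).trans_eq (mk_T lam)

lemma field_eq {z : T lam → Bool} (S : Set (T lam))
    (hS : ∀ a b : T lam, Ez pair z a b → a ∈ S ∧ b ∈ S)
    (hwo : IsWellOrder S (fun a b : S => Ez pair z a.1 b.1))
    (hex : ∃ a b, Ez pair z a b) :
    S = {a | ∃ b, Ez pair z a b ∨ Ez pair z b a} := by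
  obtain ⟨x, y, hxy⟩ := hex
  have hx : x ∈ S := (hS x y hxy).1
  have hy : y ∈ S := (hS x y hxy).2
  ext a
  constructor
  · intro ha
    haveI := hwo
    rcases trichotomous_of (fun a b : S => Ez pair z a.1 b.1) ⟨a, ha⟩ ⟨x, hx⟩ with h | h | h
    · exact ⟨x, Or.inl h⟩
    · have : a = x := congrArg Subtype.val h
      exact this ▸ ⟨y, Or.inl hxy⟩
    · exact ⟨x, Or.inr h⟩
  · rintro ⟨b, hb | hb⟩
    · exact (hS a b hb).1
    · exact (hS b a hb).2

lemma no_rel_of_le_one {z : T lam → Bool} {α : Ordinal.{u}}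
    (h : codesWO pair z α) (hα : α ≤ 1) : ∀ a b, ¬ Ez pair z a b := by
  obtain ⟨S, hS, hwo, ht⟩ := h
  intro a b hab
  obtain ⟨ha, hb⟩ := hS a b hab
  haveI := hwo
  rcases Ordinal.le_one_iff.1 (ht.le.trans hα) with h0 | h1
  · exact (Ordinal.type_eq_zero_iff_isEmpty.1 h0).false ⟨a, ha⟩
  · obtain ⟨u⟩ := Ordinal.type_eq_one_iff_unique.1 h1
    have hab' : a = b := by haveI := u; exact congrArg Subtype.val (Subsingleton.elim (⟨a, ha⟩ : S) ⟨b, hb⟩)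
    subst hab'
    exact (hwo.toIsWellFounded.wf.isIrrefl).irrefl ⟨a, ha⟩ hab

lemma codes_zero {z : T lam → Bool} (hno : ∀ a b, ¬ Ez pair z a b) :
    codesWO pair z 0 := by
  refine ⟨∅, fun a b h => absurd h (hno a b), ?_, ?_⟩
  · exact
      { trichotomous := fun a => isEmptyElim a
        wf := wellFounded_of_isEmpty _ }
  · exact Ordinal.type_eq_zero_of_empty _

lemma codes_one {z : T lam → Bool} (hno : ∀ a b, ¬ Ez pair z a b)
    (hne : Nonempty (T lam)) : codesWO pair z 1 := by
  obtain ⟨c⟩ := hne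
  have hwo : IsWellOrder ({c} : Set (T lam)) (fun a b => Ez pair z a.1 b.1) :=
    { trichotomous := fun a b _ _ => Subsingleton.elim a b
      wf := ⟨fun a => ⟨a, fun b hb => absurd hb (hno _ _)⟩⟩ }
  haveI := hwo
  exact ⟨{c}, fun a b h => absurd h (hno a b), hwo, Ordinal.type_eq_one_of_unique _⟩

lemma codes_unique {z : T lam → Bool} {α β : Ordinal.{u}}
    (ha : codesWO pair z α) (hb : codesWO pair z β) :
    α = β ∨ (α ≤ 1 ∧ β ≤ 1) := by
  by_cases hex : ∃ a b, Ez pair z a b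
  · left
    obtain ⟨S, hS, hwo, ht⟩ := ha
    obtain ⟨S', hS', hwo', ht'⟩ := hb
    have hSS : S = S' := (field_eq S hS hwo hex).trans (field_eq S' hS' hwo' hex).symm
    subst hSS
    rw [← ht, ← ht']
  · right
    push_neg at hex
    have key : ∀ γ : Ordinal.{u}, codesWO pair z γ → γ ≤ 1 := by
      rintro γ ⟨S, hS, hwo, ht⟩
      haveI := hwo
      haveI : Subsingleton S := by
        constructor
        intro a b
        rcases trichotomous_of (fun a b : S => Ez pair z a.1 b.1) a b with h | h | h
        · exact absurd h (hex _ _)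
        · exact h
        · exact absurd h (hex _ _)
      rw [← ht]
      rcases isEmpty_or_nonempty S with h | h
      · rw [Ordinal.type_eq_zero_of_empty]
        exact zero_le_one
      · rw [Ordinal.type_eq_one_of_unique]
    exact ⟨key α ha, key β hb⟩

lemma codes_of_le_one {z : T lam → Bool} {α β : Ordinal.{u}}
    (h : codesWO pair z α) (hα : α ≤ 1) (hβ : β ≤ 1) (hne : Nonempty (T lam)) :
    codesWO pair z β := by
  have hno := no_rel_of_le_one h hα
  rcases Ordinal.le_one_iff.1 hβ with rfl | rfl
  · exact codes_zero hno
  · exact codes_one hno hne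


lemma exists_min_code {lam : Cardinal.{u}} {pair : T lam × T lam ≃ T lam}
    (K2 : Set (T lam → Bool)) (leK : (T lam → Bool) → (T lam → Bool) → Prop)
    (hrefl : ∀ x ∈ K2, leK x x)
    (htot : ∀ x ∈ K2, ∀ y ∈ K2, leK x y ∨ leK y x)
    (hwf : Set.WellFoundedOn K2 (fun x y => leK x y ∧ x ≠ y))
    (hne : Nonempty (T lam))
    {α : Ordinal.{u}} (hα : ∃ z ∈ K2, codesWO pair z α) :
    ∃ z, z ∈ K2 ∧ codesWO pair z α ∧
      ∀ y ∈ K2, (∃ β, codesWO pair z β ∧ codesWO pair y β) → leK z y := by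
  obtain ⟨z0, hz0K, hz0c⟩ := hα
  have hsub : {z | z ∈ K2 ∧ codesWO pair z α} ⊆ K2 := fun z hz => hz.1
  have hwfs : Set.WellFoundedOn {z | z ∈ K2 ∧ codesWO pair z α}
      (fun x y => leK x y ∧ x ≠ y) := hwf.subset hsub
  obtain ⟨m, -, hmin⟩ := WellFounded.has_min hwfs Set.univ ⟨⟨z0, hz0K, hz0c⟩, trivial⟩
  refine ⟨m.1, m.2.1, m.2.2, ?_⟩
  rintro y hyK ⟨β, hmβ, hyβ⟩
  have hyα : codesWO pair y α := by
    rcases codes_unique hmβ m.2.2 with h | ⟨hβ1, hα1⟩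
    · exact h ▸ hyβ
    · exact codes_of_le_one hyβ hβ1 hα1 hne
  rcases htot m.1 m.2.1 y hyK with h | h
  · exact h
  · by_cases hey : y = m.1
    · exact hey ▸ hrefl y hyK
    · exact absurd ⟨h, hey⟩ (hmin ⟨y, hyK, hyα⟩ trivial)

end MCAux


/-- Let `K` be an inner model of ZFC + GCH with the weak covering property at
a strong limit singular `λ` of countable cofinality (so `(λ⁺)^K = λ⁺`, built into the
hypothesis `hcodes` which says that `K` has codes for every `α < λ⁺`), carrying a definable
well-ordering `≤_K` of its `λ`-reals `K2`.  Then the set `A_K` of `≤_K`-minimal codes has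
cardinality `λ⁺` in `V` and fails the λ-PSP in `V`. -/

theorem minimal_codes_fail_PSP (lam : Cardinal.{u})
    (hstr : lam.IsStrongLimit) (hcof : lam.ord.cof = ℵ₀)
    (pair : T lam × T lam ≃ T lam)
    (K2 : Set (T lam → Bool)) (leK : (T lam → Bool) → (T lam → Bool) → Prop)
    (hrefl : ∀ x ∈ K2, leK x x)
    (htot : ∀ x ∈ K2, ∀ y ∈ K2, leK x y ∨ leK y x)
    (hanti : ∀ x y : T lam → Bool, leK x y → leK y x → x = y)
    (hwf : Set.WellFoundedOn K2 (fun x y => leK x y ∧ x ≠ y))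
    (hcodes : ∀ α : Ordinal.{u}, α < (Order.succ lam).ord → ∃ z ∈ K2, codesWO pair z α)
    (hBound : ∀ B : Set (T lam → Bool), IsLamAnalytic lam B →
      (∀ z ∈ B, ∃ α : Ordinal.{u}, codesWO pair z α) →
      ∃ β : Ordinal.{u}, β < (Order.succ lam).ord ∧
        ∀ z ∈ B, ∀ α : Ordinal.{u}, codesWO pair z α → α ≤ β)
    (hImg : ∀ f : (T lam → Bool) → (T lam → Bool),
      @Continuous _ _ (btop lam) (btop lam) f → Function.Injective f →
      IsLamAnalytic lam (Set.range f)) :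
    #{x : T lam → Bool | x ∈ K2 ∧ (∃ α : Ordinal.{u}, codesWO pair x α) ∧
        ∀ y ∈ K2, (∃ α : Ordinal.{u}, codesWO pair x α ∧ codesWO pair y α) → leK x y}
      = Order.succ lam ∧
    ¬ ∃ f : (T lam → Bool) → (T lam → Bool), IsTopEmb (btop lam) (btop lam) f ∧
      Set.range f ⊆ {x : T lam → Bool | x ∈ K2 ∧ (∃ α : Ordinal.{u}, codesWO pair x α) ∧
        ∀ y ∈ K2, (∃ α : Ordinal.{u}, codesWO pair x α ∧ codesWO pair y α) → leK x y} := by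
  classical
  have hmkT : #(T lam) = lam := MCAux.mk_T lam
  have haleph : ℵ₀ ≤ lam := by
    have h := Ordinal.cof_le_card lam.ord
    rwa [hcof, Cardinal.card_ord] at h
  have hne : Nonempty (T lam) :=
    Cardinal.mk_ne_zero_iff.1 (by rw [hmkT]; exact (Cardinal.aleph0_pos.trans_le haleph).ne')
  set A := {x : T lam → Bool | x ∈ K2 ∧ (∃ α : Ordinal.{u}, codesWO pair x α) ∧
      ∀ y ∈ K2, (∃ α : Ordinal.{u}, codesWO pair x α ∧ codesWO pair y α) → leK x y} with hA
  have key_unique : ∀ x ∈ A, ∀ y ∈ A,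
      (∃ α : Ordinal.{u}, codesWO pair x α ∧ codesWO pair y α) → x = y := by
    rintro x hx y hy ⟨α, hxα, hyα⟩
    exact hanti x y (hx.2.2 y hy.1 ⟨α, hxα, hyα⟩) (hy.2.2 x hx.1 ⟨α, hyα, hxα⟩)
  have hlamlt : lam < Order.succ lam := Order.lt_succ lam
  set o : Ordinal.{u} := (Order.succ lam).ord with ho
  have hocard : o.card = Order.succ lam := Cardinal.card_ord _
  constructor
  · apply le_antisymm
    · -- upper bound : every element of A codes a unique ordinal < λ⁺
      have hx2 : ∀ x : A, ∃ α : Ordinal.{u}, codesWO pair x.1 α := fun x => x.2.2.1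
      choose g hg using hx2
      have hglt : ∀ x : A, g x < o := fun x =>
        Cardinal.lt_ord.2 ((MCAux.codes_card_le (hg x)).trans_lt hlamlt)
      have hinj : Function.Injective (fun x : A => (@Ordinal.ToType.mk o) ⟨g x, hglt x⟩) := by
        intro x y hxy
        have hgeq : g x = g y :=
          congrArg Subtype.val (((@Ordinal.ToType.mk o)).injective hxy)
        refine Subtype.ext (key_unique x.1 x.2 y.1 y.2 ⟨g x, hg x, ?_⟩)
        rw [hgeq]; exact hg y
      have hle := Cardinal.mk_le_of_injective hinj
      rwa [Cardinal.mk_toType, hocard] at hle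
    · -- lower bound : a minimal code for each 2 + α, α < λ⁺
      have pick : ∀ a : o.ToType, ∃ z, z ∈ K2 ∧
          codesWO pair z (2 + ((((@Ordinal.ToType.mk o)).symm a : Set.Iio o) : Ordinal)) ∧
          ∀ y ∈ K2, (∃ β, codesWO pair z β ∧ codesWO pair y β) → leK z y := by
        intro a
        have hta : ((((@Ordinal.ToType.mk o)).symm a : Set.Iio o) : Ordinal) < o := (((@Ordinal.ToType.mk o)).symm a).2
        have h1 : (((((@Ordinal.ToType.mk o)).symm a : Set.Iio o) : Ordinal)).card ≤ lam :=
          Order.lt_succ_iff.1 (Cardinal.lt_ord.1 hta)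
        have h2a : 2 + ((((@Ordinal.ToType.mk o)).symm a : Set.Iio o) : Ordinal) < o := by
          refine Cardinal.lt_ord.2 ?_
          rw [Ordinal.card_add]
          have h2 : (2 : Ordinal).card ≤ lam := by
            have : ((2 : ℕ) : Cardinal) ≤ lam := (Cardinal.nat_lt_aleph0 2).le.trans haleph
            simpa using this
          calc (2 : Ordinal).card + (((((@Ordinal.ToType.mk o)).symm a : Set.Iio o) : Ordinal)).card
              ≤ lam + lam := add_le_add h2 h1
            _ = lam := Cardinal.add_eq_self haleph
            _ < Order.succ lam := hlamlt
        exact MCAux.exists_min_code K2 leK hrefl htot hwf hne (hcodes _ h2a)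
      choose h hK hc hmin using pick
      have hinj : Function.Injective h := by
        intro a b hab
        have hcb : codesWO pair (h a) (2 + ((((@Ordinal.ToType.mk o)).symm b : Set.Iio o) : Ordinal)) := by
          rw [hab]; exact hc b
        rcases MCAux.codes_unique (hc a) hcb with heq | ⟨h1, -⟩
        · have := Subtype.ext (add_left_cancel heq)
          exact ((@Ordinal.ToType.mk o)).symm.injective this
        · exfalso
          have h2le : (2 : Ordinal) ≤ 2 + ((((@Ordinal.ToType.mk o)).symm a : Set.Iio o) : Ordinal) :=
            le_self_add
          have hcontra := h2le.trans h1
          norm_num at hcontra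
      have hrange : ∀ a, h a ∈ A := fun a => ⟨hK a, ⟨_, hc a⟩, hmin a⟩
      have hinj2 : Function.Injective (fun a : o.ToType => (⟨h a, hrange a⟩ : A)) :=
        fun a b hab => hinj (congrArg Subtype.val hab)
      have hle := Cardinal.mk_le_of_injective hinj2
      rwa [Cardinal.mk_toType, hocard] at hle
  · -- failure of the λ-PSP
    rintro ⟨f, ⟨finj, fcont, -⟩, hsub⟩
    obtain ⟨β, hβo, hβ⟩ := hBound _ (hImg f fcont finj) (fun z hz => (hsub hz).2.1)
    choose g hg using fun x : (T lam → Bool) => (hsub (Set.mem_range_self x)).2.1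
    have hglt : ∀ x, g x < β + 1 := by
      intro x
      rw [Ordinal.add_one_eq_succ, Order.lt_succ_iff]
      exact hβ _ (Set.mem_range_self x) _ (hg x)
    have hinj2 : Function.Injective
        (fun x : (T lam → Bool) => (@Ordinal.ToType.mk (β + 1)) ⟨g x, hglt x⟩) := by
      intro x y hxy
      have hgeq : g x = g y :=
        congrArg Subtype.val (((@Ordinal.ToType.mk (β + 1))).injective hxy)
      refine finj (key_unique _ (hsub (Set.mem_range_self x)) _ (hsub (Set.mem_range_self y))
        ⟨g x, hg x, ?_⟩)
      rw [hgeq]; exact hg y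
    have hle : #(T lam → Bool) ≤ (β + 1).card := by
      have := Cardinal.mk_le_of_injective hinj2
      rwa [Cardinal.mk_toType] at this
    have hcardβ : β.card ≤ lam := Order.lt_succ_iff.1 (Cardinal.lt_ord.1 hβo)
    have hle2 : (β + 1).card ≤ lam := by
      rw [Ordinal.card_add, Ordinal.card_one]
      calc β.card + 1 ≤ lam + lam :=
            add_le_add hcardβ (le_trans Cardinal.one_le_aleph0 haleph)
        _ = lam := Cardinal.add_eq_self haleph
    have hT2 : #(T lam → Bool) = 2 ^ lam := by
      rw [Cardinal.mk_arrow, hmkT]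
      simp
    have h2l : (2 : Cardinal.{u}) ^ lam ≤ lam := hT2 ▸ (hle.trans hle2)
    exact absurd h2l (Cardinal.cantor lam).not_ge
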